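/- Let T1 : Fin m1 × Fin n1 → α and T2 : Fin m2 × Fin n2 → α be tables with m2 ≤ m1 and n2 ≤ n1. Then the SALTO value of (T1, T2) equals the maximum of |O_π| over permutation tuples π of the restricted form (σ1, τ1, id, id), i.e. with the row and column permutations of the smaller table T2 fixed to the identity. -/

import Mathlib

/-- The overlap `O_π` of tables `T1`, `T2` under the permutation tuple
`π = (σ1, τ1, σ2, τ2)`: the set of positions `(i, j)` with `i < min m1 m2`,
`j < min n1 n2` where the permuted cell values agree. -/
def overlap {α : Type*} [DecidableEq α] {m1 n1 m2 n2 : ℕ}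
    (T1 : Fin m1 × Fin n1 → α) (T2 : Fin m2 × Fin n2 → α)
    (σ1 : Equiv.Perm (Fin m1)) (τ1 : Equiv.Perm (Fin n1))
    (σ2 : Equiv.Perm (Fin m2)) (τ2 : Equiv.Perm (Fin n2)) :
    Finset (Fin (min m1 m2) × Fin (min n1 n2)) :=
  Finset.univ.filter fun p =>
    T1 (σ1 (Fin.castLE (min_le_left m1 m2) p.1), τ1 (Fin.castLE (min_le_left n1 n2) p.2)) =
    T2 (σ2 (Fin.castLE (min_le_right m1 m2) p.1), τ2 (Fin.castLE (min_le_right n1 n2) p.2))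

/-- The SALTO value: the maximum of `|O_π|` over all permutation tuples `π`. -/
def salto {α : Type*} [DecidableEq α] {m1 n1 m2 n2 : ℕ}
    (T1 : Fin m1 × Fin n1 → α) (T2 : Fin m2 × Fin n2 → α) : ℕ :=
  Finset.univ.sup fun π : Equiv.Perm (Fin m1) × Equiv.Perm (Fin n1) ×
      Equiv.Perm (Fin m2) × Equiv.Perm (Fin n2) =>
    (overlap T1 T2 π.1 π.2.1 π.2.2.1 π.2.2.2).card

/-- **It suffices to permute the larger table.** If `m2 ≤ m1` and `n2 ≤ n1`,
then the SALTO value of `(T1, T2)` is already attained by permutation tuples of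
the form `(σ1, τ1, id, id)`, i.e. fixing the smaller table `T2`. -/
theorem salto_eq_sup_fix_smaller {α : Type*} [DecidableEq α] {m1 n1 m2 n2 : ℕ}
    (T1 : Fin m1 × Fin n1 → α) (T2 : Fin m2 × Fin n2 → α)
    (hm : m2 ≤ m1) (hn : n2 ≤ n1) :
    salto T1 T2 =
      Finset.univ.sup fun p : Equiv.Perm (Fin m1) × Equiv.Perm (Fin n1) =>
        (overlap T1 T2 p.1 p.2 (Equiv.refl (Fin m2)) (Equiv.refl (Fin n2))).card := by
  classical
  apply le_antisymm
  · apply Finset.sup_le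
    rintro ⟨σ1, τ1, σ2, τ2⟩ -
    set e1 : Equiv.Perm (Fin m1) := (σ2⁻¹).viaFintypeEmbedding (Fin.castLEEmb hm) with he1
    set e2 : Equiv.Perm (Fin n1) := (τ2⁻¹).viaFintypeEmbedding (Fin.castLEEmb hn) with he2
    have key : (overlap T1 T2 σ1 τ1 σ2 τ2).card
        = (overlap T1 T2 (e1.trans σ1) (e2.trans τ1)
            (Equiv.refl (Fin m2)) (Equiv.refl (Fin n2))).card := by
      apply Finset.card_bij'
        (i := fun p _ => (Fin.cast (min_eq_right hm).symm (σ2 (Fin.castLE (min_le_right m1 m2) p.1)),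
                          Fin.cast (min_eq_right hn).symm (τ2 (Fin.castLE (min_le_right n1 n2) p.2))))
        (j := fun p _ => (Fin.cast (min_eq_right hm).symm (σ2⁻¹ (Fin.castLE (min_le_right m1 m2) p.1)),
                          Fin.cast (min_eq_right hn).symm (τ2⁻¹ (Fin.castLE (min_le_right n1 n2) p.2))))
      · rintro ⟨i, j⟩ hp
        simp only [overlap, Finset.mem_filter, Finset.mem_univ, true_and] at hp ⊢
        have h1 : Fin.castLE (min_le_left m1 m2)
            (Fin.cast (min_eq_right hm).symm (σ2 (Fin.castLE (min_le_right m1 m2) i)))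
            = Fin.castLEEmb hm (σ2 (Fin.castLE (min_le_right m1 m2) i)) := by
          apply Fin.ext; simp
        have h2 : Fin.castLE (min_le_left n1 n2)
            (Fin.cast (min_eq_right hn).symm (τ2 (Fin.castLE (min_le_right n1 n2) j)))
            = Fin.castLEEmb hn (τ2 (Fin.castLE (min_le_right n1 n2) j)) := by
          apply Fin.ext; simp
        have h3 : Fin.castLE (min_le_right m1 m2)
            (Fin.cast (min_eq_right hm).symm (σ2 (Fin.castLE (min_le_right m1 m2) i)))
            = σ2 (Fin.castLE (min_le_right m1 m2) i) := by apply Fin.ext; simp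
        have h4 : Fin.castLE (min_le_right n1 n2)
            (Fin.cast (min_eq_right hn).symm (τ2 (Fin.castLE (min_le_right n1 n2) j)))
            = τ2 (Fin.castLE (min_le_right n1 n2) j) := by apply Fin.ext; simp
        have h5 : Fin.castLEEmb hm (Fin.castLE (min_le_right m1 m2) i)
            = Fin.castLE (min_le_left m1 m2) i := by apply Fin.ext; simp
        have h6 : Fin.castLEEmb hn (Fin.castLE (min_le_right n1 n2) j)
            = Fin.castLE (min_le_left n1 n2) j := by apply Fin.ext; simp
        simp only [Equiv.trans_apply, h1, h2, h3, h4, Equiv.refl_apply, he1, he2]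
        rw [Equiv.Perm.viaFintypeEmbedding_apply_image, Equiv.Perm.viaFintypeEmbedding_apply_image,
          Equiv.Perm.coe_inv, Equiv.symm_apply_apply, Equiv.Perm.coe_inv, Equiv.symm_apply_apply, h5, h6]
        exact hp
      · rintro ⟨i, j⟩ hp
        simp only [overlap, Finset.mem_filter, Finset.mem_univ, true_and] at hp ⊢
        have h1 : Fin.castLE (min_le_left m1 m2)
            (Fin.cast (min_eq_right hm).symm (σ2⁻¹ (Fin.castLE (min_le_right m1 m2) i)))
            = Fin.castLEEmb hm (σ2⁻¹ (Fin.castLE (min_le_right m1 m2) i)) := by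
          apply Fin.ext; simp
        have h2 : Fin.castLE (min_le_left n1 n2)
            (Fin.cast (min_eq_right hn).symm (τ2⁻¹ (Fin.castLE (min_le_right n1 n2) j)))
            = Fin.castLEEmb hn (τ2⁻¹ (Fin.castLE (min_le_right n1 n2) j)) := by
          apply Fin.ext; simp
        have h3 : Fin.castLE (min_le_right m1 m2)
            (Fin.cast (min_eq_right hm).symm (σ2⁻¹ (Fin.castLE (min_le_right m1 m2) i)))
            = σ2⁻¹ (Fin.castLE (min_le_right m1 m2) i) := by apply Fin.ext; simp
        have h4 : Fin.castLE (min_le_right n1 n2)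
            (Fin.cast (min_eq_right hn).symm (τ2⁻¹ (Fin.castLE (min_le_right n1 n2) j)))
            = τ2⁻¹ (Fin.castLE (min_le_right n1 n2) j) := by apply Fin.ext; simp
        have h5 : Fin.castLEEmb hm (Fin.castLE (min_le_right m1 m2) i)
            = Fin.castLE (min_le_left m1 m2) i := by apply Fin.ext; simp
        have h6 : Fin.castLEEmb hn (Fin.castLE (min_le_right n1 n2) j)
            = Fin.castLE (min_le_left n1 n2) j := by apply Fin.ext; simp
        simp only [Equiv.trans_apply, Equiv.refl_apply, he1, he2] at hp
        rw [← h5, ← h6, Equiv.Perm.viaFintypeEmbedding_apply_image,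
          Equiv.Perm.viaFintypeEmbedding_apply_image] at hp
        rw [h1, h2, h3, h4, Equiv.Perm.coe_inv, Equiv.apply_symm_apply, Equiv.Perm.coe_inv, Equiv.apply_symm_apply]
        exact hp
      · rintro ⟨i, j⟩ _
        have cm : ∀ x : Fin m2, Fin.castLE (min_le_right m1 m2)
            (Fin.cast (min_eq_right hm).symm x) = x := fun x => rfl
        have cn : ∀ x : Fin n2, Fin.castLE (min_le_right n1 n2)
            (Fin.cast (min_eq_right hn).symm x) = x := fun x => rfl
        simp only [cm, cn, Equiv.Perm.coe_inv, Equiv.symm_apply_apply]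
        apply Prod.ext <;> (apply Fin.ext; simp)
      · rintro ⟨i, j⟩ _
        have cm : ∀ x : Fin m2, Fin.castLE (min_le_right m1 m2)
            (Fin.cast (min_eq_right hm).symm x) = x := fun x => rfl
        have cn : ∀ x : Fin n2, Fin.castLE (min_le_right n1 n2)
            (Fin.cast (min_eq_right hn).symm x) = x := fun x => rfl
        simp only [cm, cn, Equiv.Perm.coe_inv, Equiv.apply_symm_apply]
        apply Prod.ext <;> (apply Fin.ext; simp)
    rw [key]
    exact Finset.le_sup (f := fun p : Equiv.Perm (Fin m1) × Equiv.Perm (Fin n1) =>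
      (overlap T1 T2 p.1 p.2 (Equiv.refl (Fin m2)) (Equiv.refl (Fin n2))).card)
      (Finset.mem_univ (e1.trans σ1, e2.trans τ1))
  · apply Finset.sup_le
    rintro ⟨σ1, τ1⟩ -
    exact Finset.le_sup (f := fun π : Equiv.Perm (Fin m1) × Equiv.Perm (Fin n1) ×
        Equiv.Perm (Fin m2) × Equiv.Perm (Fin n2) =>
      (overlap T1 T2 π.1 π.2.1 π.2.2.1 π.2.2.2).card)
      (Finset.mem_univ (σ1, τ1, Equiv.refl (Fin m2), Equiv.refl (Fin n2)))
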